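/- Let f ∈ ℤ[X] be a polynomial of even degree all of whose coefficients are odd. Then f is squarefree in ℚ[X]; in particular, the discriminant of f is nonzero. -/

import Mathlib

open Polynomial

/-- The product `∏_{i<j} (α_i - α_j)^2` over a list of complex numbers. -/
noncomputable def pairProd (l : List ℂ) : ℂ :=
  ∏ i : Fin l.length, ∏ j : Fin l.length,
    if (i : ℕ) < (j : ℕ) then (l.get i - l.get j) ^ 2 else 1

/-- The discriminant `Δ(f) = a_n^{2n-2} ∏_{i<j} (α_i - α_j)^2` of an integer
polynomial, where `α_1, …, α_n` are its complex zeros with multiplicity. -/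
noncomputable def polyDisc (f : ℤ[X]) : ℂ :=
  (f.leadingCoeff : ℂ) ^ (2 * (f.natDegree : ℤ) - 2) * pairProd ((f.aroots ℂ).toList)

/-- `P(𝒩)`: integer polynomials with all coefficients in `N` and nonzero constant term. -/
def Pset (N : Set ℤ) : Set ℤ[X] :=
  {f | (∀ i ≤ f.natDegree, f.coeff i ∈ N) ∧ f.eval 0 ≠ 0}

/-- `W(𝒩)`: all complex zeros of polynomials in `P(𝒩)`. -/
def Wset (N : Set ℤ) : Set ℂ :=
  {z | ∃ f ∈ Pset N, aeval z f = 0}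

/-- `M(𝒩)`: the closure of `W(𝒩)` in `ℂ`. -/
noncomputable def Mset (N : Set ℤ) : Set ℂ := closure (Wset N)

/-- `P^□(𝒩)`: polynomials in `P(𝒩)` whose discriminant is the square of a rational. -/
noncomputable def PsqSet (N : Set ℤ) : Set ℤ[X] :=
  {f | f ∈ Pset N ∧ ∃ q : ℚ, polyDisc f = (q : ℂ) ^ 2}

/-- `W^□(𝒩)`: all complex zeros of polynomials in `P^□(𝒩)`. -/
noncomputable def WsqSet (N : Set ℤ) : Set ℂ :=
  {z | ∃ f ∈ PsqSet N, aeval z f = 0}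

/-- `M^□(𝒩)`: the closure of `W^□(𝒩)` in `ℂ`. -/
noncomputable def MsqSet (N : Set ℤ) : Set ℂ := closure (WsqSet N)


lemma map_zmod2_eq (g : ℤ[X]) (hodd : ∀ i ≤ g.natDegree, Odd (g.coeff i)) :
    g.map (Int.castRingHom (ZMod 2)) = ∑ i ∈ Finset.range (g.natDegree + 1), X ^ i := by
  ext i
  rw [coeff_map, finset_sum_coeff]
  simp only [coeff_X_pow, Finset.sum_ite_eq, Finset.mem_range, Nat.lt_add_one_iff]
  by_cases h : i ≤ g.natDegree
  · obtain ⟨m, hm⟩ := hodd i h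
    rw [if_pos h]
    show ((g.coeff i : ZMod 2)) = 1
    rw [hm]; push_cast
    rw [show ((2:ZMod 2)) = 0 from by decide]; ring
  · rw [if_neg h, g.coeff_eq_zero_of_natDegree_lt (lt_of_not_ge h)]
    exact Int.cast_zero

lemma squarefree_zmod2 (g : ℤ[X]) (heven : Even g.natDegree)
    (hodd : ∀ i ≤ g.natDegree, Odd (g.coeff i)) :
    Squarefree (g.map (Int.castRingHom (ZMod 2))) := by
  have hsq : Squarefree ((X : (ZMod 2)[X]) ^ (g.natDegree + 1) - C 1) := by
    refine (separable_X_pow_sub_C 1 ?_ one_ne_zero).squarefree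
    obtain ⟨m, hm⟩ := heven
    have : ((g.natDegree + 1 : ℕ) : ZMod 2) = 1 := by
      rw [hm]; push_cast
      rw [← two_mul, show ((2:ZMod 2)) = 0 from by decide]; ring
    rw [this]; exact one_ne_zero
  refine hsq.squarefree_of_dvd ?_
  rw [map_zmod2_eq g hodd]
  exact ⟨X - 1, by rw [geom_sum_mul, map_one]⟩

lemma squarefree_map_rat_of_primitive (g : ℤ[X]) (hprim : g.IsPrimitive)
    (heven : Even g.natDegree) (hodd : ∀ i ≤ g.natDegree, Odd (g.coeff i)) :
    Squarefree (g.map (Int.castRingHom ℚ)) := by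
  have hg0 : g ≠ 0 := by
    intro h
    have := hodd 0 (by simp [h])
    simp [h] at this
  have hgm0 : g.map (Int.castRingHom ℚ) ≠ 0 :=
    (Polynomial.map_ne_zero_iff (Int.cast_injective)).mpr hg0
  intro k hk
  have hk0 : k ≠ 0 := by rintro rfl; exact hgm0 (zero_dvd_iff.mp (by simpa using hk))
  set N := IsLocalization.integerNormalization (nonZeroDivisors ℤ) k with hN
  have hN0 : N ≠ 0 := fun h => hk0 (IsFractionRing.integerNormalization_eq_zero_iff.mp h)
  set p := N.primPart with hp
  -- p.map ℚ is associated to k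
  obtain ⟨b, hb⟩ := IsLocalization.integerNormalization_map_to_map (nonZeroDivisors ℤ) k
  have hb0 : (b : ℤ) ≠ 0 := nonZeroDivisors.coe_ne_zero b
  have hassoc : Associated (p.map (Int.castRingHom ℚ)) k := by
    have h1 : N.map (Int.castRingHom ℚ) = C ((b : ℤ) : ℚ) * k := by
      rw [show Int.castRingHom ℚ = algebraMap ℤ ℚ from rfl, hb, Algebra.smul_def,
        Polynomial.algebraMap_apply, eq_intCast]
    have h2 : N.map (Int.castRingHom ℚ) = C ((N.content : ℤ) : ℚ) * p.map (Int.castRingHom ℚ) := by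
      conv_lhs => rw [N.eq_C_content_mul_primPart]
      simp [Polynomial.map_mul]
      exact Or.inl rfl
    have hc0 : N.content ≠ 0 := fun h => hN0 (content_eq_zero_iff.mp h)
    have hu1 : IsUnit (C ((N.content : ℤ) : ℚ)) :=
      Polynomial.isUnit_C.mpr (isUnit_iff_ne_zero.mpr (by exact_mod_cast hc0))
    have hu2 : IsUnit (C ((b : ℤ) : ℚ)) :=
      Polynomial.isUnit_C.mpr (isUnit_iff_ne_zero.mpr (by exact_mod_cast hb0))
    have key : C ((N.content : ℤ) : ℚ) * p.map (Int.castRingHom ℚ) = C ((b : ℤ) : ℚ) * k :=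
      h2.symm.trans h1
    have a1 : Associated (p.map (Int.castRingHom ℚ))
        (C ((N.content : ℤ) : ℚ) * p.map (Int.castRingHom ℚ)) :=
      (associated_unit_mul_left _ _ hu1).symm
    rw [key] at a1
    exact a1.trans (associated_unit_mul_left _ _ hu2)
  -- p * p divides g in ℤ[X]
  have hdvd : p * p ∣ g := by
    apply (N.isPrimitive_primPart.mul N.isPrimitive_primPart).dvd_of_fraction_map_dvd_fraction_map
      (K := ℚ)
    rw [show algebraMap ℤ ℚ = Int.castRingHom ℚ from rfl, Polynomial.map_mul]
    exact dvd_trans (mul_dvd_mul hassoc.dvd hassoc.dvd) hk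
  obtain ⟨h, hgh⟩ := hdvd
  -- reduce mod 2
  have hsq2 := squarefree_zmod2 g heven hodd
  have hlc2 : (Int.castRingHom (ZMod 2)) g.leadingCoeff ≠ 0 := by
    obtain ⟨m, hm⟩ := hodd g.natDegree le_rfl
    show ((g.leadingCoeff : ZMod 2)) ≠ 0
    rw [Polynomial.leadingCoeff, hm]; push_cast
    rw [show ((2:ZMod 2)) = 0 from by decide]
    simp
  have hG0 : g.map (Int.castRingHom (ZMod 2)) ≠ 0 := by
    intro hz
    apply hlc2
    rw [Polynomial.leadingCoeff, ← Polynomial.coeff_map, hz, coeff_zero]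
  have hGdeg : (g.map (Int.castRingHom (ZMod 2))).natDegree = g.natDegree :=
    natDegree_map_of_leadingCoeff_ne_zero _ hlc2
  have hpu2 : IsUnit (p.map (Int.castRingHom (ZMod 2))) := by
    apply hsq2
    exact ⟨h.map (Int.castRingHom (ZMod 2)), by rw [hgh]; simp [Polynomial.map_mul]⟩
  -- degree count
  have hp0 : p ≠ 0 := N.primPart_ne_zero
  have hh0 : h ≠ 0 := by rintro rfl; rw [mul_zero] at hgh; exact hg0 hgh
  have hp20 : p.map (Int.castRingHom (ZMod 2)) ≠ 0 := hpu2.ne_zero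
  have hh20 : h.map (Int.castRingHom (ZMod 2)) ≠ 0 := by
    intro hz
    apply hG0
    rw [hgh, Polynomial.map_mul, hz, mul_zero]
  have e1 : g.natDegree = p.natDegree + p.natDegree + h.natDegree := by
    rw [hgh, natDegree_mul (mul_ne_zero hp0 hp0) hh0, natDegree_mul hp0 hp0]
  have e2 : g.natDegree = (h.map (Int.castRingHom (ZMod 2))).natDegree := by
    rw [← hGdeg, hgh, Polynomial.map_mul, Polynomial.map_mul,
      natDegree_mul (mul_ne_zero hp20 hp20) hh20, natDegree_mul hp20 hp20,
      natDegree_eq_zero_of_isUnit hpu2]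
    omega
  have e3 : (h.map (Int.castRingHom (ZMod 2))).natDegree ≤ h.natDegree := natDegree_map_le
  have hpdeg : p.natDegree = 0 := by omega
  -- p is a unit, hence k is
  have hpu : IsUnit p := by
    have hc := N.isPrimitive_primPart.content_eq_one
    rw [← hp] at hc
    rw [p.eq_C_of_natDegree_eq_zero hpdeg] at hc ⊢
    rw [content_C, normalize_eq_one] at hc
    exact Polynomial.isUnit_C.mpr hc
  exact isUnit_or_eq_zero_of_isUnit_integerNormalization_primPart hk0 hpu

lemma squarefree_map_rat (f : ℤ[X]) (heven : Even f.natDegree)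
    (hodd : ∀ i ≤ f.natDegree, Odd (f.coeff i)) :
    Squarefree (f.map (Int.castRingHom ℚ)) := by
  have hoddp : ∀ i ≤ f.primPart.natDegree, Odd (f.primPart.coeff i) := by
    intro i hi
    rw [f.natDegree_primPart] at hi
    have h := hodd i hi
    conv at h => rw [f.eq_C_content_mul_primPart, coeff_C_mul]
    exact (Int.odd_mul.mp h).2
  have hsq : Squarefree (f.primPart.map (Int.castRingHom ℚ)) :=
    squarefree_map_rat_of_primitive f.primPart f.isPrimitive_primPart
      (by rwa [f.natDegree_primPart]) hoddp
  have hf0 : f ≠ 0 := by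
    intro h
    have := hodd 0 (by simp [h])
    simp [h] at this
  have hc0 : f.content ≠ 0 := fun h => hf0 (content_eq_zero_iff.mp h)
  have hu : IsUnit (C ((f.content : ℤ) : ℚ)) :=
    Polynomial.isUnit_C.mpr (isUnit_iff_ne_zero.mpr (by exact_mod_cast hc0))
  intro x hx
  apply hsq x
  have heq : f.map (Int.castRingHom ℚ)
      = C ((f.content : ℤ) : ℚ) * f.primPart.map (Int.castRingHom ℚ) := by
    conv_lhs => rw [f.eq_C_content_mul_primPart]
    simp [Polynomial.map_mul]
  rw [heq] at hx
  exact hx.trans (associated_unit_mul_left _ _ hu).dvd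


/-- A polynomial of even degree all of whose coefficients are odd is squarefree over
`ℚ`; in particular its discriminant is nonzero. -/
theorem squarefree_of_even_degree_odd_coeffs (f : ℤ[X]) (heven : Even f.natDegree)
    (hodd : ∀ i ≤ f.natDegree, Odd (f.coeff i)) :
    Squarefree (f.map (Int.castRingHom ℚ)) ∧ polyDisc f ≠ 0 := by
  have hsq := squarefree_map_rat f heven hodd
  refine ⟨hsq, ?_⟩
  have hf0 : f ≠ 0 := by
    intro h
    have := hodd 0 (by simp [h])
    simp [h] at this
  have hlc : f.leadingCoeff ≠ 0 := leadingCoeff_ne_zero.mpr hf0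
  have hlcC : (f.leadingCoeff : ℂ) ≠ 0 := by exact_mod_cast hlc
  -- the roots over ℂ have no duplicates
  have hsep : (f.map (Int.castRingHom ℚ)).Separable :=
    PerfectField.separable_iff_squarefree.mpr hsq
  have hmm : f.map (algebraMap ℤ ℂ)
      = (f.map (Int.castRingHom ℚ)).map (algebraMap ℚ ℂ) := by
    rw [Polynomial.map_map]
    exact congrArg (f.map ·) (RingHom.ext_int _ _)
  have hnd : (f.aroots ℂ).Nodup := by
    rw [aroots_def, hmm]
    exact Polynomial.nodup_roots (hsep.map)
  have hndl : ((f.aroots ℂ).toList).Nodup := by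
    rwa [← Multiset.coe_nodup, Multiset.coe_toList]
  have hpp : pairProd ((f.aroots ℂ).toList) ≠ 0 := by
    unfold pairProd
    rw [Finset.prod_ne_zero_iff]
    intro i _
    rw [Finset.prod_ne_zero_iff]
    intro j _
    split_ifs with hij
    · refine pow_ne_zero _ (sub_ne_zero.mpr fun he => ?_)
      exact absurd (hndl.get_inj_iff.mp he) (Fin.ne_of_val_ne (Nat.ne_of_lt hij))
    · exact one_ne_zero
  unfold polyDisc
  exact mul_ne_zero (zpow_ne_zero _ hlcC) hpp
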